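/- Let n be even, N = 2^n, and v ∈ SU(N). Then vᵀ S v = S (equivalently, (vφ)ᵀ S (vψ) = φᵀ S ψ for all φ, ψ ∈ ℂ^N, i.e. v preserves the concurrence bilinear form) if and only if all entries of the matrix E₀† v E₀ are real; in that case E₀† v E₀ is a real special orthogonal matrix, an element of SO(N). Thus conjugation by the standard entangler identifies the symmetry group of the concurrence form inside SU(N) with SO(N). -/

import Mathlib

open Matrix Complex

noncomputable section

/-- Number of ones in the binary expansion of `j`. -/
def popCnt (j : ℕ) : ℕ := (Nat.digits 2 j).sum

/-- The `N × N` matrix `S = (-iσ^y) ⊗ ⋯ ⊗ (-iσ^y)` (`n` factors), `N = 2^n`;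
equivalently `S |j⟩ = (-1)^{#j} |N-1-j⟩`. -/
def Smat (n : ℕ) : Matrix (Fin (2 ^ n)) (Fin (2 ^ n)) ℂ :=
  fun k j => if (k : ℕ) + (j : ℕ) = 2 ^ n - 1 then (-1 : ℂ) ^ popCnt (j : ℕ) else 0

/-- The standard entangler `E₀` (for `n` even):
`E₀ = (1/√2) Σ_{j<N/2} ( |j⟩⟨2j| + i|j⟩⟨2j+1| + (-1)^{#j}(|N-j-1⟩⟨2j| - i|N-j-1⟩⟨2j+1|) )`. -/
def E0 (n : ℕ) : Matrix (Fin (2 ^ n)) (Fin (2 ^ n)) ℂ :=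
  fun r c =>
    (Real.sqrt 2 : ℂ)⁻¹ *
      (if (r : ℕ) < 2 ^ n / 2 then
        (if (c : ℕ) = 2 * (r : ℕ) then 1
         else if (c : ℕ) = 2 * (r : ℕ) + 1 then Complex.I else 0)
      else
        (if (c : ℕ) = 2 * (2 ^ n - 1 - (r : ℕ)) then
            (-1 : ℂ) ^ popCnt (2 ^ n - 1 - (r : ℕ))
         else if (c : ℕ) = 2 * (2 ^ n - 1 - (r : ℕ)) + 1 then
            -Complex.I * (-1 : ℂ) ^ popCnt (2 ^ n - 1 - (r : ℕ))
         else 0))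

/-- `Σ = Σ_{j<N/2} ( |j⟩⟨N/2+j| - |N/2+j⟩⟨j| )`. -/
def SigmaMat (n : ℕ) : Matrix (Fin (2 ^ n)) (Fin (2 ^ n)) ℂ :=
  fun r c =>
    if (c : ℕ) = (r : ℕ) + 2 ^ n / 2 then 1
    else if (r : ℕ) = (c : ℕ) + 2 ^ n / 2 then -1 else 0

/-- The standard finagler `F₀` (for `n` odd):
`F₀ = (1/√2) Σ_{j<N/2} ( |j⟩⟨j| + |N-j-1⟩⟨j| + (-1)^{#j}(|j⟩⟨N/2+j| - |N-j-1⟩⟨N/2+j|) )`. -/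
def F0 (n : ℕ) : Matrix (Fin (2 ^ n)) (Fin (2 ^ n)) ℂ :=
  fun r c =>
    (Real.sqrt 2 : ℂ)⁻¹ *
      (if (r : ℕ) < 2 ^ n / 2 then
        (if (c : ℕ) = (r : ℕ) then 1
         else if (c : ℕ) = (r : ℕ) + 2 ^ n / 2 then (-1 : ℂ) ^ popCnt (r : ℕ) else 0)
      else
        (if (c : ℕ) = 2 ^ n - 1 - (r : ℕ) then 1
         else if (c : ℕ) = (2 ^ n - 1 - (r : ℕ)) + 2 ^ n / 2 then
            -(-1 : ℂ) ^ popCnt (2 ^ n - 1 - (r : ℕ))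
         else 0))

/-- The concurrence capacity `κ(v) = sup { |(vψ)ᵀ S (vψ)| : ‖ψ‖ = 1, ψᵀSψ = 0 }`. -/
def kappa (n : ℕ) (v : Matrix (Fin (2 ^ n)) (Fin (2 ^ n)) ℂ) : ℝ :=
  sSup { r : ℝ | ∃ ψ : Fin (2 ^ n) → ℂ,
    star ψ ⬝ᵥ ψ = 1 ∧ ψ ⬝ᵥ ((Smat n) *ᵥ ψ) = 0 ∧
    r = ‖(v *ᵥ ψ) ⬝ᵥ ((Smat n) *ᵥ (v *ᵥ ψ))‖ }
section AuxPop

lemma popCnt_rec (s : ℕ) : popCnt s = s % 2 + popCnt (s / 2) := by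
  rcases Nat.eq_zero_or_pos s with h | h
  · subst h; simp [popCnt]
  · unfold popCnt
    rw [Nat.digits_def' (by norm_num : 1 < 2) h]
    simp

lemma popCnt_compl : ∀ n s : ℕ, s < 2 ^ n → popCnt (2 ^ n - 1 - s) + popCnt s = n := by
  intro n
  induction n with
  | zero => intro s hs; interval_cases s; simp [popCnt]
  | succ n ih =>
    intro s hs
    have h2 : 2 ^ (n+1) = 2 * 2 ^ n := by rw [pow_succ]; ring
    have hq : s / 2 < 2 ^ n := by omega
    have ht2 : (2 ^ (n+1) - 1 - s) / 2 = 2 ^ n - 1 - s / 2 := by omega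
    have hm : (2 ^ (n+1) - 1 - s) % 2 + s % 2 = 1 := by omega
    have := ih (s / 2) hq
    rw [popCnt_rec (2 ^ (n+1) - 1 - s), popCnt_rec s, ht2]
    omega

lemma negpow_mul_self (a : ℕ) : (-1 : ℂ) ^ a * (-1 : ℂ) ^ a = 1 := by
  rw [← pow_add]
  exact Even.neg_one_pow ⟨a, rfl⟩

lemma negpow_eq {a b : ℕ} (h : Even (a + b)) : (-1 : ℂ) ^ a = (-1 : ℂ) ^ b := by
  have h1 : (-1 : ℂ) ^ (a + b) = 1 := h.neg_one_pow
  calc (-1 : ℂ) ^ a = (-1 : ℂ) ^ a * ((-1 : ℂ) ^ b * (-1 : ℂ) ^ b) := by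
        rw [negpow_mul_self, mul_one]
    _ = (-1 : ℂ) ^ (a + b) * (-1 : ℂ) ^ b := by rw [← pow_add]; ring
    _ = (-1 : ℂ) ^ b := by rw [h1, one_mul]

end AuxPop
section AuxE

def aIdx (n r : ℕ) : ℕ := if r < 2 ^ n / 2 then 2 * r else 2 * (2 ^ n - 1 - r)

def Pc (n r : ℕ) : ℂ := if r < 2 ^ n / 2 then 1 else (-1 : ℂ) ^ popCnt (2 ^ n - 1 - r)

def Qc (n r : ℕ) : ℂ :=
  if r < 2 ^ n / 2 then Complex.I else -Complex.I * (-1 : ℂ) ^ popCnt (2 ^ n - 1 - r)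

lemma E0_eq (n : ℕ) (r c : Fin (2 ^ n)) :
    E0 n r c = (Real.sqrt 2 : ℂ)⁻¹ *
      (Pc n r * (if (c : ℕ) = aIdx n r then 1 else 0) +
       Qc n r * (if (c : ℕ) = aIdx n r + 1 then 1 else 0)) := by
  simp only [E0, aIdx, Pc, Qc]
  split_ifs <;> first | ring1 | (exfalso; omega)

lemma two_pow_eq (n : ℕ) (hn : 1 ≤ n) : 2 ^ n = 2 * 2 ^ (n - 1) := by
  conv_lhs => rw [show n = (n - 1) + 1 by omega, pow_succ]
  ring

lemma aIdx_lt (n : ℕ) (hn : 1 ≤ n) (r : Fin (2 ^ n)) : aIdx n (r : ℕ) + 1 < 2 ^ n := by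
  have h2 := two_pow_eq n hn
  have hr := r.2
  unfold aIdx
  split_ifs <;> omega

lemma aIdx_even (n r : ℕ) : aIdx n r % 2 = 0 := by
  unfold aIdx; split_ifs <;> omega

lemma sum_dd (n : ℕ) (x y : ℕ) (hx : x < 2 ^ n) :
    (∑ c : Fin (2 ^ n), (if (c : ℕ) = x then (1 : ℂ) else 0) *
      (if (c : ℕ) = y then (1 : ℂ) else 0)) = if x = y then 1 else 0 := by
  have : ∀ c : Fin (2 ^ n),
      (if (c : ℕ) = x then (1 : ℂ) else 0) * (if (c : ℕ) = y then (1 : ℂ) else 0)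
      = if c = ⟨x, hx⟩ then (if x = y then (1 : ℂ) else 0) else 0 := by
    intro c
    rcases eq_or_ne c ⟨x, hx⟩ with h | h
    · subst h; simp
    · have : (c : ℕ) ≠ x := fun hc => h (Fin.ext hc)
      simp [this, h]
  rw [Finset.sum_congr rfl (fun c _ => this c), Finset.sum_ite_eq' Finset.univ]
  simp

lemma sum_two (n : ℕ) (hn : 1 ≤ n) (r s : Fin (2 ^ n)) (p q p' q' : ℂ) :
    (∑ c : Fin (2 ^ n),
      (p * (if (c : ℕ) = aIdx n r then 1 else 0) +
       q * (if (c : ℕ) = aIdx n r + 1 then 1 else 0)) *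
      (p' * (if (c : ℕ) = aIdx n s then 1 else 0) +
       q' * (if (c : ℕ) = aIdx n s + 1 then 1 else 0)))
    = if aIdx n (r : ℕ) = aIdx n (s : ℕ) then p * p' + q * q' else 0 := by
  have har := aIdx_lt n hn r
  have has := aIdx_lt n hn s
  have her := aIdx_even n r
  have hes := aIdx_even n s
  have expand : ∀ c : Fin (2 ^ n),
      (p * (if (c : ℕ) = aIdx n r then 1 else 0) +
       q * (if (c : ℕ) = aIdx n r + 1 then 1 else 0)) *
      (p' * (if (c : ℕ) = aIdx n s then 1 else 0) +
       q' * (if (c : ℕ) = aIdx n s + 1 then 1 else 0))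
      = p * p' * ((if (c : ℕ) = aIdx n r then 1 else 0) * (if (c : ℕ) = aIdx n s then 1 else 0))
      + p * q' * ((if (c : ℕ) = aIdx n r then 1 else 0) * (if (c : ℕ) = aIdx n s + 1 then 1 else 0))
      + q * p' * ((if (c : ℕ) = aIdx n r + 1 then 1 else 0) * (if (c : ℕ) = aIdx n s then 1 else 0))
      + q * q' * ((if (c : ℕ) = aIdx n r + 1 then 1 else 0) * (if (c : ℕ) = aIdx n s + 1 then 1 else 0)) :=
    fun c => by ring
  rw [Finset.sum_congr rfl (fun c _ => expand c)]
  rw [Finset.sum_add_distrib, Finset.sum_add_distrib, Finset.sum_add_distrib,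
    ← Finset.mul_sum, ← Finset.mul_sum, ← Finset.mul_sum, ← Finset.mul_sum,
    sum_dd n (aIdx n (r : ℕ)) (aIdx n (s : ℕ)) (by omega),
    sum_dd n (aIdx n (r : ℕ)) (aIdx n (s : ℕ) + 1) (by omega),
    sum_dd n (aIdx n (r : ℕ) + 1) (aIdx n (s : ℕ)) (by omega),
    sum_dd n (aIdx n (r : ℕ) + 1) (aIdx n (s : ℕ) + 1) (by omega)]
  rw [if_neg (by omega : ¬ aIdx n (r : ℕ) = aIdx n (s : ℕ) + 1),
    if_neg (by omega : ¬ aIdx n (r : ℕ) + 1 = aIdx n (s : ℕ))]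
  by_cases h : aIdx n (r : ℕ) = aIdx n (s : ℕ)
  · rw [if_pos h, if_pos (by omega : aIdx n (r : ℕ) + 1 = aIdx n (s : ℕ) + 1), if_pos h]; ring
  · rw [if_neg h, if_neg (by omega : ¬ aIdx n (r : ℕ) + 1 = aIdx n (s : ℕ) + 1), if_neg h]; ring

end AuxE
section AuxMul

lemma kapsq : ((Real.sqrt 2 : ℝ) : ℂ)⁻¹ * ((Real.sqrt 2 : ℝ) : ℂ)⁻¹ = (2 : ℂ)⁻¹ := by
  rw [← mul_inv, ← Complex.ofReal_mul, Real.mul_self_sqrt (by norm_num)]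
  norm_num

lemma star_ite (p : Prop) [Decidable p] :
    star (if p then (1 : ℂ) else 0) = if p then (1 : ℂ) else 0 := by
  split <;> simp

lemma E0_star_eq (n : ℕ) (r c : Fin (2 ^ n)) :
    star (E0 n r c) = (Real.sqrt 2 : ℂ)⁻¹ *
      (star (Pc n r) * (if (c : ℕ) = aIdx n r then 1 else 0) +
       star (Qc n r) * (if (c : ℕ) = aIdx n r + 1 then 1 else 0)) := by
  rw [E0_eq]
  rw [star_mul', star_add, star_mul', star_mul', star_ite, star_ite]
  congr 1
  rw [star_inv₀, Complex.star_def, Complex.conj_ofReal]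

lemma E0_entry_sum (n : ℕ) (hn : 1 ≤ n) (r s : Fin (2 ^ n)) (p' q' : ℂ)
    (B : Matrix (Fin (2 ^ n)) (Fin (2 ^ n)) ℂ)
    (hB : ∀ c : Fin (2 ^ n), B c s = (Real.sqrt 2 : ℂ)⁻¹ *
      (p' * (if (c : ℕ) = aIdx n s then 1 else 0) +
       q' * (if (c : ℕ) = aIdx n s + 1 then 1 else 0))) :
    (E0 n * B) r s = (2 : ℂ)⁻¹ *
      (if aIdx n (r : ℕ) = aIdx n (s : ℕ) then Pc n r * p' + Qc n r * q' else 0) := by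
  rw [Matrix.mul_apply]
  have hterm : ∀ c : Fin (2 ^ n), E0 n r c * B c s =
      (((Real.sqrt 2 : ℝ) : ℂ)⁻¹ * ((Real.sqrt 2 : ℝ) : ℂ)⁻¹) *
      ((Pc n r * (if (c : ℕ) = aIdx n r then 1 else 0) +
        Qc n r * (if (c : ℕ) = aIdx n r + 1 then 1 else 0)) *
       (p' * (if (c : ℕ) = aIdx n s then 1 else 0) +
        q' * (if (c : ℕ) = aIdx n s + 1 then 1 else 0))) := by
    intro c; rw [E0_eq, hB]; ring
  rw [Finset.sum_congr rfl (fun c _ => hterm c), ← Finset.mul_sum,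
    sum_two n hn r s _ _ _ _, kapsq]

lemma E0_mul_conjTranspose (n : ℕ) (hn : 1 ≤ n) : E0 n * (E0 n)ᴴ = 1 := by
  have h2 := two_pow_eq n hn
  ext r s
  rw [E0_entry_sum n hn r s (star (Pc n s)) (star (Qc n s)) _
    (fun c => by rw [Matrix.conjTranspose_apply, E0_star_eq]), Matrix.one_apply]
  have hrs := r.2; have hss := s.2
  by_cases hr : (r : ℕ) < 2 ^ n / 2 <;> by_cases hs : (s : ℕ) < 2 ^ n / 2 <;>
    simp only [aIdx, Pc, Qc, hr, hs, if_true, if_false]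
  · -- both small
    have hc : (2 * (r : ℕ) = 2 * (s : ℕ)) ↔ r = s := by rw [Fin.ext_iff]; omega
    rcases eq_or_ne r s with h | h
    · rw [if_pos (hc.mpr h), if_pos h]
      simp [Complex.star_def, Complex.conj_I]
      norm_num
    · rw [if_neg (fun hh => h (hc.mp hh)), if_neg h, mul_zero]
  · -- r small, s big
    have hne : r ≠ s := fun h => hs (h ▸ hr)
    rw [if_neg hne]
    by_cases hc : 2 * (r : ℕ) = 2 * (2 ^ n - 1 - (s : ℕ))
    · rw [if_pos hc]
      simp only [Complex.star_def, map_pow, _root_.map_neg, _root_.map_one, _root_.map_mul, Complex.conj_I]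
      ring_nf
      rw [Complex.I_sq]
      ring
    · rw [if_neg hc, mul_zero]
  · -- r big, s small
    have hne : r ≠ s := fun h => hr (h ▸ hs)
    rw [if_neg hne]
    by_cases hc : 2 * (2 ^ n - 1 - (r : ℕ)) = 2 * (s : ℕ)
    · rw [if_pos hc]
      simp only [Complex.star_def, map_pow, _root_.map_neg, _root_.map_one, _root_.map_mul, Complex.conj_I]
      ring_nf
      rw [Complex.I_sq]
      ring
    · rw [if_neg hc, mul_zero]
  · -- both big
    have hc : (2 * (2 ^ n - 1 - (r : ℕ)) = 2 * (2 ^ n - 1 - (s : ℕ))) ↔ r = s := by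
      rw [Fin.ext_iff]; omega
    rcases eq_or_ne r s with h | h
    · rw [if_pos (hc.mpr h), if_pos h, h]
      simp only [Complex.star_def, map_pow, _root_.map_neg, _root_.map_one, _root_.map_mul, Complex.conj_I]
      ring_nf
      rw [show ((-1:ℂ))^(popCnt (2^n-1-(s:ℕ))*2) = ((-1:ℂ)^popCnt (2^n-1-(s:ℕ)))^2 by
        rw [← pow_mul]]
      rw [show ((-1:ℂ)^popCnt (2^n-1-(s:ℕ)))^2 = 1 by
        rw [sq]; exact negpow_mul_self _]
      ring_nf
      rw [Complex.I_sq]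
      norm_num
    · rw [if_neg (fun hh => h (hc.mp hh)), if_neg h, mul_zero]

end AuxMul
section AuxSmat

lemma E0_mul_transpose (n : ℕ) (hn : 1 ≤ n) (hev : Even n) :
    E0 n * (E0 n)ᵀ = Smat n := by
  have h2 := two_pow_eq n hn
  ext r s
  rw [E0_entry_sum n hn r s (Pc n s) (Qc n s) _
    (fun c => by rw [Matrix.transpose_apply, E0_eq]), Smat]
  have hrs := r.2; have hss := s.2
  by_cases hr : (r : ℕ) < 2 ^ n / 2 <;> by_cases hs : (s : ℕ) < 2 ^ n / 2 <;>
    simp only [aIdx, Pc, Qc, hr, hs, if_true, if_false]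
  · -- both small: r + s < N - 1
    rw [if_neg (by omega : ¬ (r : ℕ) + (s : ℕ) = 2 ^ n - 1)]
    by_cases hc : 2 * (r : ℕ) = 2 * (s : ℕ)
    · rw [if_pos hc]
      ring_nf
      rw [Complex.I_sq]
      ring
    · rw [if_neg hc, mul_zero]
  · -- r small, s big
    have hcc : (2 * (r : ℕ) = 2 * (2 ^ n - 1 - (s : ℕ))) ↔ ((r : ℕ) + (s : ℕ) = 2 ^ n - 1) := by
      omega
    by_cases hc : (r : ℕ) + (s : ℕ) = 2 ^ n - 1
    · rw [if_pos (hcc.mpr hc), if_pos hc]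
      have hpar : (-1 : ℂ) ^ popCnt (2 ^ n - 1 - (s : ℕ)) = (-1 : ℂ) ^ popCnt (s : ℕ) := by
        apply negpow_eq
        rw [popCnt_compl n (s : ℕ) hss]
        exact hev
      rw [hpar]
      ring_nf
      rw [Complex.I_sq]
      ring
    · rw [if_neg (fun hh => hc (hcc.mp hh)), if_neg hc, mul_zero]
  · -- r big, s small
    have hcc : (2 * (2 ^ n - 1 - (r : ℕ)) = 2 * (s : ℕ)) ↔ ((r : ℕ) + (s : ℕ) = 2 ^ n - 1) := by
      omega
    by_cases hc : (r : ℕ) + (s : ℕ) = 2 ^ n - 1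
    · rw [if_pos (hcc.mpr hc), if_pos hc]
      have hk : 2 ^ n - 1 - (r : ℕ) = (s : ℕ) := by omega
      rw [hk]
      ring_nf
      rw [Complex.I_sq]
      ring
    · rw [if_neg (fun hh => hc (hcc.mp hh)), if_neg hc, mul_zero]
  · -- both big: r + s > N - 1
    rw [if_neg (by omega : ¬ (r : ℕ) + (s : ℕ) = 2 ^ n - 1)]
    by_cases hc : 2 * (2 ^ n - 1 - (r : ℕ)) = 2 * (2 ^ n - 1 - (s : ℕ))
    · rw [if_pos hc]
      have hk : 2 ^ n - 1 - (r : ℕ) = 2 ^ n - 1 - (s : ℕ) := by omega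
      rw [hk]
      have hx := negpow_mul_self (popCnt (2 ^ n - 1 - (s : ℕ)))
      ring_nf
      ring_nf at hx
      rw [hx, Complex.I_sq]
      ring
    · rw [if_neg hc, mul_zero]

lemma Smat_conj (n : ℕ) : (Smat n).map (starRingEnd ℂ) = Smat n := by
  ext r s
  simp only [Matrix.map_apply, Smat, apply_ite (starRingEnd ℂ), map_pow, _root_.map_neg,
    _root_.map_one, map_zero]

end AuxSmat
set_option linter.unusedSectionVars false
section AuxMain

variable {N : Type*} [Fintype N] [DecidableEq N]

/-- entrywise complex conjugation of a matrix -/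
def Mc (A : Matrix N N ℂ) : Matrix N N ℂ := A.map (starRingEnd ℂ)

lemma Mc_mul (A B : Matrix N N ℂ) : Mc (A * B) = Mc A * Mc B :=
  Matrix.map_mul

lemma Mc_one : Mc (1 : Matrix N N ℂ) = 1 := by
  ext i j
  simp [Mc, Matrix.map_apply, Matrix.one_apply, apply_ite (starRingEnd ℂ)]

lemma Mc_T (A : Matrix N N ℂ) : Mc (Aᵀ) = Aᴴ := by
  ext i j; simp [Mc, Matrix.map_apply, Matrix.conjTranspose_apply, Complex.star_def]

lemma Mc_H (A : Matrix N N ℂ) : Mc (Aᴴ) = Aᵀ := by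
  ext i j; simp [Mc, Matrix.map_apply, Matrix.conjTranspose_apply, Complex.star_def]

lemma Mc_transpose (A : Matrix N N ℂ) : Mc (Aᵀ) = (Mc A)ᵀ := by
  ext i j; simp [Mc, Matrix.map_apply]

lemma transpose_H (A : Matrix N N ℂ) : (Aᴴ)ᵀ = Mc A := by
  ext i j; simp [Mc, Matrix.map_apply, Matrix.conjTranspose_apply, Complex.star_def]

lemma mulVec_dot (A : Matrix N N ℂ) (x y : N → ℂ) :
    (A *ᵥ x) ⬝ᵥ y = x ⬝ᵥ (Aᵀ *ᵥ y) := by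
  rw [Matrix.mulVec_transpose, dotProduct_comm, Matrix.dotProduct_mulVec,
    dotProduct_comm]

lemma dot_single (A : Matrix N N ℂ) (i j : N) :
    Pi.single i (1 : ℂ) ⬝ᵥ (A *ᵥ Pi.single j 1) = A i j := by
  simp [Matrix.mulVec_single, single_dotProduct]

end AuxMain

/-- **`K ≅ SO(N)` for an even number of qubits.** For `n` even and `v ∈ SU(2^n)`:
`vᵀ S v = S` iff `v` preserves the concurrence bilinear form, iff all entries of
`E₀† v E₀` are real; and in that case `E₀† v E₀` is a real special orthogonal matrix. -/
theorem K_is_SO (n : ℕ) (hn : 1 ≤ n) (hev : Even n)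
    (v : Matrix (Fin (2 ^ n)) (Fin (2 ^ n)) ℂ)
    (hv : v ∈ Matrix.unitaryGroup (Fin (2 ^ n)) ℂ) (hvdet : v.det = 1) :
    ((vᵀ * Smat n * v = Smat n) ↔
        (∀ φ ψ : Fin (2 ^ n) → ℂ,
          (v *ᵥ φ) ⬝ᵥ ((Smat n) *ᵥ (v *ᵥ ψ)) = φ ⬝ᵥ ((Smat n) *ᵥ ψ))) ∧
    ((vᵀ * Smat n * v = Smat n) ↔
        (∀ i j, (((E0 n)ᴴ * v * E0 n) i j).im = 0)) ∧
    (vᵀ * Smat n * v = Smat n →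
        ((E0 n)ᴴ * v * E0 n)ᵀ * ((E0 n)ᴴ * v * E0 n) = 1 ∧
        ((E0 n)ᴴ * v * E0 n).det = 1) := by
  set E := E0 n with hE
  set S := Smat n with hSdef
  set w : Matrix (Fin (2 ^ n)) (Fin (2 ^ n)) ℂ := Eᴴ * v * E with hw
  -- unitarity of v
  have hv1 : vᴴ * v = 1 := by
    have := hv.1; rwa [Matrix.star_eq_conjTranspose] at this
  have hv2 : v * vᴴ = 1 := by
    have := hv.2; rwa [Matrix.star_eq_conjTranspose] at this
  have hvTM : vᵀ * Mc v = 1 := by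
    have := congrArg Matrix.transpose hv1
    rwa [Matrix.transpose_mul, transpose_H, Matrix.transpose_one] at this
  have hMvT : Mc v * vᵀ = 1 := by
    have := congrArg Matrix.transpose hv2
    rwa [Matrix.transpose_mul, transpose_H, Matrix.transpose_one] at this
  -- E facts
  have hEEH : E * Eᴴ = 1 := E0_mul_conjTranspose n hn
  have hEHE : Eᴴ * E = 1 := mul_eq_one_comm.mp hEEH
  have hEET : E * Eᵀ = S := E0_mul_transpose n hn hev
  have hMcS : Mc S = S := Smat_conj n
  have hTM : Eᵀ * Mc E = 1 := by
    have := congrArg Mc hEHE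
    rwa [Mc_mul, Mc_H, Mc_one] at this
  have hMT : Mc E * Eᵀ = 1 := by
    have := congrArg Mc hEEH
    rwa [Mc_mul, Mc_H, Mc_one] at this
  have hMcEH : Mc E * Eᴴ = S := by
    rw [← Mc_T E, ← Mc_mul, hEET, hMcS]
  have hSS : S * S = 1 := by
    calc S * S = (E * Eᵀ) * (Mc E * Eᴴ) := by rw [hEET, hMcEH]
      _ = E * (Eᵀ * Mc E) * Eᴴ := by simp only [Matrix.mul_assoc]
      _ = E * Eᴴ := by rw [hTM, Matrix.mul_one]
      _ = 1 := hEEH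
  have hSMcE : S * Mc E = E := by
    rw [← hEET, Matrix.mul_assoc, hTM, Matrix.mul_one]
  have hTS : Eᵀ * S = Eᴴ := by
    rw [← hMcEH, ← Matrix.mul_assoc, hTM, Matrix.one_mul]
  -- the chain of equivalences
  have lem1 : vᵀ * S * v = S ↔ S * v = Mc v * S := by
    constructor
    · intro h
      calc S * v = (Mc v * vᵀ) * S * v := by rw [hMvT, Matrix.one_mul]
        _ = Mc v * (vᵀ * S * v) := by rw [Matrix.mul_assoc, Matrix.mul_assoc, Matrix.mul_assoc]
        _ = Mc v * S := by rw [h]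
    · intro h
      calc vᵀ * S * v = vᵀ * (S * v) := by rw [Matrix.mul_assoc]
        _ = vᵀ * (Mc v * S) := by rw [h]
        _ = (vᵀ * Mc v) * S := by rw [Matrix.mul_assoc]
        _ = S := by rw [hvTM, Matrix.one_mul]
  have lem2 : S * v = Mc v * S ↔ Mc v = S * v * S := by
    constructor
    · intro h
      calc Mc v = Mc v * (S * S) := by rw [hSS, Matrix.mul_one]
        _ = (Mc v * S) * S := by rw [Matrix.mul_assoc]
        _ = (S * v) * S := by rw [h]
    · intro h
      calc S * v = S * v * (S * S) := by rw [hSS, Matrix.mul_one]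
        _ = (S * v * S) * S := by rw [Matrix.mul_assoc, Matrix.mul_assoc, Matrix.mul_assoc]
        _ = Mc v * S := by rw [← h]
  have hMcw : Mc w = Eᵀ * Mc v * Mc E := by
    rw [hw, Mc_mul, Mc_mul, Mc_H]
  have lem3 : Mc w = w ↔ Mc v = S * v * S := by
    constructor
    · intro h
      rw [hMcw, hw] at h
      calc Mc v = (Mc E * Eᵀ) * Mc v * (Mc E * Eᵀ) := by rw [hMT, Matrix.one_mul, Matrix.mul_one]
        _ = Mc E * (Eᵀ * Mc v * Mc E) * Eᵀ := by simp only [Matrix.mul_assoc]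
        _ = Mc E * (Eᴴ * v * E) * Eᵀ := by rw [h]
        _ = (Mc E * Eᴴ) * v * (E * Eᵀ) := by simp only [Matrix.mul_assoc]
        _ = S * v * S := by rw [hMcEH, hEET]
    · intro h
      rw [hMcw, h, hw]
      calc Eᵀ * (S * v * S) * Mc E = (Eᵀ * S) * v * (S * Mc E) := by
            simp only [Matrix.mul_assoc]
        _ = Eᴴ * v * E := by rw [hTS, hSMcE]
  have lem4 : (∀ i j, (w i j).im = 0) ↔ Mc w = w := by
    constructor
    · intro h
      ext i j
      simp only [Mc, Matrix.map_apply]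
      rw [Complex.conj_eq_iff_im]
      exact h i j
    · intro h i j
      rw [← Complex.conj_eq_iff_im]
      have := congrFun (congrFun h i) j
      simpa [Mc, Matrix.map_apply] using this
  refine ⟨?_, ?_, ?_⟩
  · -- part 1
    constructor
    · intro h φ ψ
      calc (v *ᵥ φ) ⬝ᵥ (S *ᵥ (v *ᵥ ψ))
          = (v *ᵥ φ) ⬝ᵥ ((S * v) *ᵥ ψ) := by rw [Matrix.mulVec_mulVec]
        _ = φ ⬝ᵥ (vᵀ *ᵥ ((S * v) *ᵥ ψ)) := by rw [mulVec_dot]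
        _ = φ ⬝ᵥ ((vᵀ * (S * v)) *ᵥ ψ) := by rw [Matrix.mulVec_mulVec]
        _ = φ ⬝ᵥ (S *ᵥ ψ) := by rw [← Matrix.mul_assoc, h]
    · intro h
      ext i j
      have h1 := h (Pi.single i 1) (Pi.single j 1)
      rw [Matrix.mulVec_mulVec, mulVec_dot, Matrix.mulVec_mulVec] at h1
      rw [dot_single, dot_single, ← Matrix.mul_assoc] at h1
      exact h1
  · -- part 2
    rw [lem1, lem2, ← lem3, ← lem4]
  · -- part 3
    intro h
    have hwR : Mc w = w := lem3.mpr (lem2.mp (lem1.mp h))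
    have hwH : wᴴ = wᵀ := by
      rw [← Mc_T w, Mc_transpose, hwR]
    have hwHw : wᴴ * w = 1 := by
      rw [hw]
      calc (Eᴴ * v * E)ᴴ * (Eᴴ * v * E)
          = (Eᴴ * (vᴴ * E)) * (Eᴴ * v * E) := by
            rw [Matrix.conjTranspose_mul, Matrix.conjTranspose_mul,
              Matrix.conjTranspose_conjTranspose]
        _ = Eᴴ * (vᴴ * ((E * Eᴴ) * (v * E))) := by simp only [Matrix.mul_assoc]
        _ = Eᴴ * (vᴴ * (v * E)) := by rw [hEEH, Matrix.one_mul]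
        _ = (Eᴴ * (vᴴ * v)) * E := by simp only [Matrix.mul_assoc]
        _ = Eᴴ * E := by rw [hv1, Matrix.mul_one]
        _ = 1 := hEHE
    constructor
    · rw [← hwH]; exact hwHw
    · have : w.det = Eᴴ.det * v.det * E.det := by
        rw [hw, Matrix.det_mul, Matrix.det_mul]
      rw [this, hvdet, mul_one, ← Matrix.det_mul, hEHE, Matrix.det_one]
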